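/- Let p > 1, ε > 0, and let ρ : [0, ∞) → (0, ∞) be Borel measurable and locally integrable with ∫_0^∞ ρ(t) dt = ∞. Let (t_k)_{k≥1} be the unique strictly increasing sequence with t₁ = 0, t_k → ∞, and ∫_{t_k}^{t_{k+1}} ρ(t) dt = 1 for all k, and set O_k = [t_k, t_{k+1}). Assume 𝓡_{p,ρ} = sup_{k≥1} ∫_{O_k} e^{-εpt/(p-1)} ρ(t)^{1/(1-p)} dt < ∞. Let f : [0, ∞) → ℝ and g : [0, ∞) → [0, ∞) be measurable with ∫_0^∞ |f(t)|^p ρ(t) dt < ∞ and ∫_0^∞ g(t)^p ρ(t) dt < ∞, and suppose |f(t₂) − f(t₁)| ≤ ∫_{t₁}^{t₂} g(s) e^{-εs} ds for all 0 ≤ t₁ ≤ t₂. Then f(t) → 0 as t → ∞. -/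

import Mathlib

open MeasureTheory
open scoped ENNReal

/-- one-dimensional core of Lemma 3.3, (a) ⇒ (b): if `∫_0^∞ ρ = ∞`,
`(t_k)` is the unit-`ρ`-mass partition of `[0, ∞)` and
`𝓡_{p,ρ} = sup_k ∫_{O_k} e^{-εpt/(p-1)} ρ(t)^{1/(1-p)} dt < ∞`, then every `f` in the
weighted Sobolev class (i.e. `∫_0^∞ |f|^p ρ < ∞`, with upper-gradient density `g`
satisfying `∫_0^∞ g^p ρ < ∞` and the oscillation bound) tends to `0` at `∞`. -/
theorem stmt_18 (p ε : ℝ) (hp : 1 < p) (hε : 0 < ε)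
    (ρ : ℝ → ℝ) (hρmeas : Measurable ρ) (hρpos : ∀ t, 0 ≤ t → 0 < ρ t)
    (hρloc : ∀ T : ℝ, 0 < T → IntegrableOn ρ (Set.Icc 0 T))
    (hρdiv : ∫⁻ t in Set.Ici (0 : ℝ), ENNReal.ofReal (ρ t) = ⊤)
    (t : ℕ → ℝ) (ht0 : t 0 = 0) (htmono : StrictMono t)
    (httop : Filter.Tendsto t Filter.atTop Filter.atTop)
    (htmass : ∀ k : ℕ, ∫⁻ s in Set.Ico (t k) (t (k + 1)), ENNReal.ofReal (ρ s) = 1)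
    (hRcal : (⨆ k : ℕ, ∫⁻ s in Set.Ico (t k) (t (k + 1)),
        ENNReal.ofReal (Real.exp (-(ε * p * s) / (p - 1)) * ρ s ^ (1 / (1 - p)))) < ⊤)
    (f g : ℝ → ℝ) (hfmeas : Measurable f) (hgmeas : Measurable g) (hg0 : ∀ s, 0 ≤ g s)
    (hfint : ∫⁻ s in Set.Ici (0 : ℝ), ENNReal.ofReal (|f s| ^ p * ρ s) < ⊤)
    (hgint : ∫⁻ s in Set.Ici (0 : ℝ), ENNReal.ofReal (g s ^ p * ρ s) < ⊤)
    (hosc : ∀ t₁ t₂ : ℝ, 0 ≤ t₁ → t₁ ≤ t₂ →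
      ENNReal.ofReal |f t₂ - f t₁| ≤
        ∫⁻ s in Set.Icc t₁ t₂, ENNReal.ofReal (g s * Real.exp (-(ε * s)))) :
    Filter.Tendsto f Filter.atTop (nhds 0) := by
  classical
  have hp0 : (0:ℝ) < p := lt_trans one_pos hp
  have hp10 : (0:ℝ) < p - 1 := sub_pos.mpr hp
  set q : ℝ := p / (p - 1) with hqdef
  have hpq : p.HolderConjugate q := Real.HolderConjugate.conjExponent hp
  have hq0 : (0:ℝ) < q := hpq.symm.pos
  have ht_nonneg : ∀ k, 0 ≤ t k := fun k => ht0 ▸ htmono.monotone (Nat.zero_le k)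
  set O : ℕ → Set ℝ := fun k => Set.Ico (t k) (t (k+1)) with hOdef
  have hOmeas : ∀ k, MeasurableSet (O k) := fun k => measurableSet_Ico
  have hOsub : ∀ k, O k ⊆ Set.Ici (0:ℝ) := fun k x hx => le_trans (ht_nonneg k) hx.1
  set A : ℕ → ℝ≥0∞ := fun k => ∫⁻ s in O k, ENNReal.ofReal (|f s| ^ p * ρ s) with hAdef
  set B : ℕ → ℝ≥0∞ := fun k => ∫⁻ s in O k, ENNReal.ofReal (g s ^ p * ρ s) with hBdef
  set C : ℕ → ℝ≥0∞ := fun k => ∫⁻ s in O k,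
      ENNReal.ofReal (Real.exp (-(ε * p * s) / (p - 1)) * ρ s ^ (1 / (1 - p))) with hCdef
  set R : ℝ≥0∞ := ⨆ k, C k with hRdef
  set M : ℝ≥0∞ := R ^ (1/q) with hMdef
  have hM_ne_top : M ≠ ⊤ :=
    (ENNReal.rpow_lt_top_of_nonneg (by positivity) hRcal.ne).ne
  -- exponent identities
  have hne1 : p - 1 ≠ 0 := ne_of_gt hp10
  have hne2 : (1:ℝ) - p ≠ 0 := by intro h; linarith
  have he1 : ∀ s : ℝ, Real.exp (-(ε*s)) ^ q = Real.exp (-(ε * p * s) / (p - 1)) := by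
    intro s
    rw [← Real.exp_mul]
    congr 1
    rw [hqdef]
    field_simp
  have he2 : -p⁻¹ * q = 1 / (1 - p) := by
    rw [hqdef]
    field_simp
    try ring
  -- key pointwise bound
  have key : ∀ k, ∀ x ∈ O k, ENNReal.ofReal |f x| ≤ B k ^ (1/p) * M + A k ^ (1/p) := by
    intro k x hx
    have ha0 : (0:ℝ) ≤ t k := ht_nonneg k
    have hx0 : (0:ℝ) ≤ x := ha0.trans hx.1
    have hρpos' : ∀ s ∈ Set.Icc (t k) (t (k+1)), 0 < ρ s := fun s hs => hρpos s (ha0.trans hs.1)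
    have hρpos'' : ∀ s ∈ O k, 0 < ρ s := fun s hs => hρpos s (ha0.trans hs.1)
    -- Hölder bound for the gradient term
    have hD_holder : (∫⁻ s in Set.Icc (t k) (t (k+1)), ENNReal.ofReal (g s * Real.exp (-(ε * s))))
        ≤ B k ^ (1/p) * M := by
      have h1 : (∫⁻ s in Set.Icc (t k) (t (k+1)), ENNReal.ofReal (g s * Real.exp (-(ε * s))))
          = ∫⁻ s in Set.Icc (t k) (t (k+1)),
              ((fun s => ENNReal.ofReal (g s * ρ s ^ p⁻¹)) *
               (fun s => ENNReal.ofReal (Real.exp (-(ε * s)) * ρ s ^ (-p⁻¹)))) s := by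
        refine setLIntegral_congr_fun_ae measurableSet_Icc (ae_of_all _ fun s hs => ?_)
        have hρs := hρpos' s hs
        simp only [Pi.mul_apply]
        rw [← ENNReal.ofReal_mul (mul_nonneg (hg0 s) (Real.rpow_nonneg hρs.le _))]
        congr 1
        have hone : ρ s ^ p⁻¹ * ρ s ^ (-p⁻¹) = 1 := by
          rw [← Real.rpow_add hρs]; simp
        calc g s * Real.exp (-(ε*s))
            = g s * Real.exp (-(ε*s)) * (ρ s ^ p⁻¹ * ρ s ^ (-p⁻¹)) := by rw [hone]; ring
          _ = g s * ρ s ^ p⁻¹ * (Real.exp (-(ε*s)) * ρ s ^ (-p⁻¹)) := by ring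
      rw [h1]
      have hmeas1 : AEMeasurable (fun s => ENNReal.ofReal (g s * ρ s ^ p⁻¹))
          (volume.restrict (Set.Icc (t k) (t (k+1)))) :=
        ((hgmeas.mul (hρmeas.pow measurable_const)).ennreal_ofReal).aemeasurable
      have hmeas2 : AEMeasurable (fun s => ENNReal.ofReal (Real.exp (-(ε * s)) * ρ s ^ (-p⁻¹)))
          (volume.restrict (Set.Icc (t k) (t (k+1)))) :=
        ((((measurable_id.const_mul ε).neg.exp).mul (hρmeas.pow measurable_const)).ennreal_ofReal).aemeasurable
      refine le_trans (ENNReal.lintegral_mul_le_Lp_mul_Lq _ hpq hmeas1 hmeas2) ?_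
      have hF : (∫⁻ s in Set.Icc (t k) (t (k+1)), ENNReal.ofReal (g s * ρ s ^ p⁻¹) ^ p) = B k := by
        have h2 : (∫⁻ s in Set.Icc (t k) (t (k+1)), ENNReal.ofReal (g s * ρ s ^ p⁻¹) ^ p)
            = ∫⁻ s in Set.Icc (t k) (t (k+1)), ENNReal.ofReal (g s ^ p * ρ s) := by
          refine setLIntegral_congr_fun_ae measurableSet_Icc (ae_of_all _ fun s hs => ?_)
          have hρs := hρpos' s hs
          rw [ENNReal.ofReal_rpow_of_nonneg (mul_nonneg (hg0 s) (Real.rpow_nonneg hρs.le _)) hp0.le]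
          congr 1
          rw [Real.mul_rpow (hg0 s) (Real.rpow_nonneg hρs.le _), ← Real.rpow_mul hρs.le,
            inv_mul_cancel₀ hp0.ne', Real.rpow_one]
        have h3 : (∫⁻ s in Set.Ico (t k) (t (k+1)), ENNReal.ofReal (g s ^ p * ρ s))
            = ∫⁻ s in Set.Icc (t k) (t (k+1)), ENNReal.ofReal (g s ^ p * ρ s) :=
          setLIntegral_congr Ico_ae_eq_Icc
        exact h2.trans h3.symm
      have hG : (∫⁻ s in Set.Icc (t k) (t (k+1)),
          ENNReal.ofReal (Real.exp (-(ε * s)) * ρ s ^ (-p⁻¹)) ^ q) = C k := by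
        have h2 : (∫⁻ s in Set.Icc (t k) (t (k+1)),
            ENNReal.ofReal (Real.exp (-(ε * s)) * ρ s ^ (-p⁻¹)) ^ q)
            = ∫⁻ s in Set.Icc (t k) (t (k+1)),
              ENNReal.ofReal (Real.exp (-(ε * p * s) / (p - 1)) * ρ s ^ (1 / (1 - p))) := by
          refine setLIntegral_congr_fun_ae measurableSet_Icc (ae_of_all _ fun s hs => ?_)
          have hρs := hρpos' s hs
          rw [ENNReal.ofReal_rpow_of_nonneg
            (mul_nonneg (Real.exp_nonneg _) (Real.rpow_nonneg hρs.le _)) hq0.le]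
          congr 1
          rw [Real.mul_rpow (Real.exp_nonneg _) (Real.rpow_nonneg hρs.le _),
            ← Real.rpow_mul hρs.le, he2, he1]
        have h3 : (∫⁻ s in Set.Ico (t k) (t (k+1)),
            ENNReal.ofReal (Real.exp (-(ε * p * s) / (p - 1)) * ρ s ^ (1 / (1 - p))))
            = ∫⁻ s in Set.Icc (t k) (t (k+1)),
              ENNReal.ofReal (Real.exp (-(ε * p * s) / (p - 1)) * ρ s ^ (1 / (1 - p))) :=
          setLIntegral_congr Ico_ae_eq_Icc
        exact h2.trans h3.symm
      rw [hF, hG]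
      refine mul_le_mul_right ?_ _
      rw [hMdef]
      exact ENNReal.rpow_le_rpow (le_iSup C k) (by positivity)
    -- Hölder bound for the average term
    have hII : (∫⁻ y in O k, ENNReal.ofReal |f y| * ENNReal.ofReal (ρ y)) ≤ A k ^ (1/p) := by
      have h1 : (∫⁻ y in O k, ENNReal.ofReal |f y| * ENNReal.ofReal (ρ y))
          = ∫⁻ y in O k,
              ((fun y => ENNReal.ofReal (|f y| * ρ y ^ p⁻¹)) *
               (fun y => ENNReal.ofReal (ρ y ^ q⁻¹))) y := by
        refine setLIntegral_congr_fun_ae (hOmeas k) (ae_of_all _ fun y hy => ?_)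
        have hρy := hρpos'' y hy
        simp only [Pi.mul_apply]
        rw [← ENNReal.ofReal_mul (abs_nonneg _),
          ← ENNReal.ofReal_mul (mul_nonneg (abs_nonneg _) (Real.rpow_nonneg hρy.le _))]
        congr 1
        have : ρ y ^ p⁻¹ * ρ y ^ q⁻¹ = ρ y := by
          rw [← Real.rpow_add hρy, hpq.inv_add_inv_eq_one, Real.rpow_one]
        calc |f y| * ρ y = |f y| * (ρ y ^ p⁻¹ * ρ y ^ q⁻¹) := by rw [this]
          _ = |f y| * ρ y ^ p⁻¹ * ρ y ^ q⁻¹ := by ring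
      rw [h1]
      have hmeas1 : AEMeasurable (fun y => ENNReal.ofReal (|f y| * ρ y ^ p⁻¹))
          (volume.restrict (O k)) :=
        ((hfmeas.abs.mul (hρmeas.pow measurable_const)).ennreal_ofReal).aemeasurable
      have hmeas2 : AEMeasurable (fun y => ENNReal.ofReal (ρ y ^ q⁻¹))
          (volume.restrict (O k)) :=
        ((hρmeas.pow measurable_const).ennreal_ofReal).aemeasurable
      refine le_trans (ENNReal.lintegral_mul_le_Lp_mul_Lq _ hpq hmeas1 hmeas2) ?_
      have hF : (∫⁻ y in O k, ENNReal.ofReal (|f y| * ρ y ^ p⁻¹) ^ p) = A k := by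
        refine setLIntegral_congr_fun_ae (hOmeas k) (ae_of_all _ fun y hy => ?_)
        have hρy := hρpos'' y hy
        rw [ENNReal.ofReal_rpow_of_nonneg
          (mul_nonneg (abs_nonneg _) (Real.rpow_nonneg hρy.le _)) hp0.le]
        congr 1
        rw [Real.mul_rpow (abs_nonneg _) (Real.rpow_nonneg hρy.le _), ← Real.rpow_mul hρy.le,
          inv_mul_cancel₀ hp0.ne', Real.rpow_one]
      have hG : (∫⁻ y in O k, ENNReal.ofReal (ρ y ^ q⁻¹) ^ q) = 1 := by
        have h2 : (∫⁻ y in O k, ENNReal.ofReal (ρ y ^ q⁻¹) ^ q)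
            = ∫⁻ y in O k, ENNReal.ofReal (ρ y) := by
          refine setLIntegral_congr_fun_ae (hOmeas k) (ae_of_all _ fun y hy => ?_)
          have hρy := hρpos'' y hy
          rw [ENNReal.ofReal_rpow_of_nonneg (Real.rpow_nonneg hρy.le _) hq0.le,
            ← Real.rpow_mul hρy.le, inv_mul_cancel₀ hq0.ne', Real.rpow_one]
        exact h2.trans (htmass k)
      rw [hF, hG]
      simp [ENNReal.one_rpow]
    -- oscillation bound
    set D : ℝ≥0∞ := ∫⁻ s in Set.Icc (t k) (t (k+1)), ENNReal.ofReal (g s * Real.exp (-(ε * s)))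
      with hDdef
    have hfd : ∀ y ∈ O k, ENNReal.ofReal |f x - f y| ≤ D := by
      intro y hy
      rcases le_total x y with h | h
      · have := hosc x y hx0 h
        rw [abs_sub_comm (f y) (f x)] at this
        refine this.trans (lintegral_mono_set ?_)
        exact Set.Icc_subset_Icc hx.1 hy.2.le
      · have := hosc y x (ha0.trans hy.1) h
        refine this.trans (lintegral_mono_set ?_)
        exact Set.Icc_subset_Icc hy.1 hx.2.le
    -- main chain
    have hmeasρE : Measurable fun y : ℝ => ENNReal.ofReal (ρ y) := hρmeas.ennreal_ofReal
    have hmass : (∫⁻ y in O k, ENNReal.ofReal (ρ y)) = 1 := htmass k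
    calc ENNReal.ofReal |f x|
        = ENNReal.ofReal |f x| * ∫⁻ y in O k, ENNReal.ofReal (ρ y) := by
          rw [hmass, mul_one]
      _ = ∫⁻ y in O k, ENNReal.ofReal |f x| * ENNReal.ofReal (ρ y) :=
          (lintegral_const_mul _ hmeasρE).symm
      _ ≤ ∫⁻ y in O k, (D + ENNReal.ofReal |f y|) * ENNReal.ofReal (ρ y) := by
          refine setLIntegral_mono ((measurable_const.add hfmeas.abs.ennreal_ofReal).mul hmeasρE)
            fun y hy => ?_
          refine mul_le_mul_left ?_ _
          have habs : |f x| ≤ |f x - f y| + |f y| := by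
            calc |f x| = |(f x - f y) + f y| := by ring_nf
              _ ≤ |f x - f y| + |f y| := abs_add_le _ _
          calc ENNReal.ofReal |f x| ≤ ENNReal.ofReal (|f x - f y| + |f y|) :=
                ENNReal.ofReal_le_ofReal habs
            _ = ENNReal.ofReal |f x - f y| + ENNReal.ofReal |f y| :=
                ENNReal.ofReal_add (abs_nonneg _) (abs_nonneg _)
            _ ≤ D + ENNReal.ofReal |f y| := add_le_add_left (hfd y hy) _
      _ = D * (∫⁻ y in O k, ENNReal.ofReal (ρ y))
            + ∫⁻ y in O k, ENNReal.ofReal |f y| * ENNReal.ofReal (ρ y) := by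
          simp_rw [add_mul]
          rw [lintegral_add_left (hmeasρE.const_mul D),
            lintegral_const_mul _ hmeasρE]
      _ ≤ B k ^ (1/p) * M + A k ^ (1/p) := by
          rw [hmass, mul_one]
          exact add_le_add hD_holder hII
  -- the bounds tend to zero
  have hdisj : Pairwise (Function.onFun Disjoint O) := by
    intro i j hij
    have : ∀ i j : ℕ, i < j → Disjoint (O i) (O j) := by
      intro i j h
      refine Set.Ico_disjoint_Ico.mpr ?_
      calc min (t (i+1)) (t (j+1)) ≤ t (i+1) := min_le_left _ _
        _ ≤ t j := htmono.monotone h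
        _ ≤ max (t i) (t j) := le_max_right _ _
    rcases hij.lt_or_gt with h | h
    · exact this i j h
    · exact (this j i h).symm
  have htsum : ∀ (h : ℝ → ℝ≥0∞),
      Measurable h → (∫⁻ s in Set.Ici (0:ℝ), h s) < ⊤ → (∑' k, ∫⁻ s in O k, h s) ≠ ⊤ := by
    intro h hmeas hfin
    rw [← lintegral_iUnion hOmeas hdisj]
    exact ((lintegral_mono_set (Set.iUnion_subset hOsub)).trans_lt hfin).ne
  have hAsum : (∑' k, A k) ≠ ⊤ :=
    htsum _ ((hfmeas.abs.pow measurable_const).mul hρmeas).ennreal_ofReal hfint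
  have hBsum : (∑' k, B k) ≠ ⊤ :=
    htsum _ ((hgmeas.pow measurable_const).mul hρmeas).ennreal_ofReal hgint
  have hA : Filter.Tendsto A Filter.atTop (nhds 0) :=
    ENNReal.tendsto_atTop_zero_of_tsum_ne_top hAsum
  have hB : Filter.Tendsto B Filter.atTop (nhds 0) :=
    ENNReal.tendsto_atTop_zero_of_tsum_ne_top hBsum
  have hrpow0 : ∀ (u : ℕ → ℝ≥0∞), Filter.Tendsto u Filter.atTop (nhds 0) →
      Filter.Tendsto (fun k => u k ^ (1/p)) Filter.atTop (nhds 0) := by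
    intro u hu
    have := ((ENNReal.continuous_rpow_const (y := 1/p)).tendsto 0).comp hu
    rw [ENNReal.zero_rpow_of_pos (by positivity : (0:ℝ) < 1/p)] at this
    exact this
  have hφ : Filter.Tendsto (fun k => B k ^ (1/p) * M + A k ^ (1/p)) Filter.atTop (nhds 0) := by
    have h1 := ENNReal.Tendsto.mul_const (hrpow0 B hB) (Or.inr hM_ne_top)
    rw [zero_mul] at h1
    simpa using h1.add (hrpow0 A hA)
  -- conclude
  have habs : Filter.Tendsto (fun x => ENNReal.ofReal |f x|) Filter.atTop (nhds 0) := by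
    rw [ENNReal.tendsto_nhds_zero]
    intro δ hδ
    obtain ⟨K, hK⟩ := Filter.eventually_atTop.mp (ENNReal.tendsto_nhds_zero.mp hφ δ hδ)
    filter_upwards [Filter.eventually_ge_atTop (t K)] with x hxK
    have hex : ∃ n, x < t n := (httop.eventually_gt_atTop x).exists
    have hnspec : x < t (Nat.find hex) := Nat.find_spec hex
    have hnK : K < Nat.find hex := by
      by_contra h
      push_neg at h
      exact absurd (lt_of_lt_of_le hnspec (htmono.monotone h)) (not_lt.mpr hxK)
    obtain ⟨k, hk⟩ : ∃ k, Nat.find hex = k + 1 := ⟨Nat.find hex - 1, by omega⟩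
    have hkx : t k ≤ x := not_lt.mp (Nat.find_min hex (by omega))
    have hxk1 : x < t (k+1) := hk ▸ hnspec
    exact (key k x ⟨hkx, hxk1⟩).trans (hK k (by omega))
  have habs' : Filter.Tendsto (fun x => |f x|) Filter.atTop (nhds 0) := by
    have h2 := (ENNReal.tendsto_toReal (a := 0) (by simp)).comp habs
    simpa [Function.comp_def, ENNReal.toReal_ofReal (abs_nonneg _)] using h2
  exact (tendsto_zero_iff_abs_tendsto_zero f).mpr habs'
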